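/- Let 0 < θ < θ₀ and define Ψ'(s) = (θ/2)·log((1+s)/(1−s)) − θ₀·s for s ∈ (−1,1), and s* = √(1 − θ/θ₀). Then: s* ∈ (0,1); Ψ' is strictly increasing on (−1,−s*] and on [s*,1), and strictly decreasing on [−s*,s*]; Ψ'(s*) < 0 < Ψ'(−s*); Ψ'(s*) is the infimum of Ψ' over (0,1) and Ψ'(−s*) is the supremum of Ψ' over (−1,0); and there exist unique points α₀ ∈ (−1,0) and β₀ ∈ (0,1) with Ψ'(α₀) = Ψ'(s*) and Ψ'(β₀) = Ψ'(−s*); moreover α₀ < −s* and β₀ > s*. -/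

import Mathlib

open Real Set Filter Topology

/-- Shape of the derivative `Ψ'` of the Flory–Huggins potential with `0 < θ < θ₀`:
monotonicity intervals determined by `s* = √(1-θ/θ₀)`, sign of the critical values,
extremality of `Ψ'(±s*)`, and existence/uniqueness of the points `α₀ ∈ (-1,0)` and
`β₀ ∈ (0,1)` where `Ψ'` takes the values `Ψ'(s*)` and `Ψ'(-s*)` respectively. -/
theorem stmt8 (θ θ₀ : ℝ) (hθ : 0 < θ) (hθθ₀ : θ < θ₀)
    (Ψ' : ℝ → ℝ)
    (hΨ' : ∀ s, Ψ' s = θ / 2 * Real.log ((1 + s) / (1 - s)) - θ₀ * s)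
    (sstar : ℝ) (hsstar : sstar = Real.sqrt (1 - θ / θ₀)) :
    sstar ∈ Set.Ioo (0 : ℝ) 1 ∧
    StrictMonoOn Ψ' (Set.Ioc (-1) (-sstar)) ∧
    StrictMonoOn Ψ' (Set.Ico sstar 1) ∧
    StrictAntiOn Ψ' (Set.Icc (-sstar) sstar) ∧
    Ψ' sstar < 0 ∧ 0 < Ψ' (-sstar) ∧
    IsGLB (Ψ' '' Set.Ioo (0 : ℝ) 1) (Ψ' sstar) ∧
    IsLUB (Ψ' '' Set.Ioo (-1 : ℝ) 0) (Ψ' (-sstar)) ∧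
    (∃! α₀, α₀ ∈ Set.Ioo (-1 : ℝ) 0 ∧ Ψ' α₀ = Ψ' sstar) ∧
    (∃! β₀, β₀ ∈ Set.Ioo (0 : ℝ) 1 ∧ Ψ' β₀ = Ψ' (-sstar)) ∧
    (∀ α₀, α₀ ∈ Set.Ioo (-1 : ℝ) 0 ∧ Ψ' α₀ = Ψ' sstar → α₀ < -sstar) ∧
    (∀ β₀, β₀ ∈ Set.Ioo (0 : ℝ) 1 ∧ Ψ' β₀ = Ψ' (-sstar) → sstar < β₀) := by
  have hθ₀ : 0 < θ₀ := hθ.trans hθθ₀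
  have hratio : θ / θ₀ < 1 := (div_lt_one hθ₀).mpr hθθ₀
  have hratio0 : 0 < θ / θ₀ := div_pos hθ hθ₀
  have hs2 : sstar ^ 2 = 1 - θ / θ₀ := by
    rw [hsstar, sq_sqrt (by linarith)]
  have hspos : 0 < sstar := by
    rw [hsstar]; exact Real.sqrt_pos.mpr (by linarith)
  have hslt1 : sstar < 1 := by nlinarith
  have hθeq : θ₀ * (1 - sstar ^ 2) = θ := by
    rw [hs2]; field_simp; ring
  have hodd : ∀ s, Ψ' (-s) = -Ψ' s := by
    intro s
    rw [hΨ', hΨ', show (1:ℝ) + -s = 1 - s by ring, show (1:ℝ) - -s = 1 + s by ring,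
        show (1 - s) / (1 + s) = ((1+s)/(1-s))⁻¹ by rw [inv_div], Real.log_inv]
    ring
  have hderiv : ∀ s ∈ Ioo (-1:ℝ) 1, HasDerivAt Ψ' (θ/(1-s^2) - θ₀) s := by
    intro s hs
    have h1 : 0 < 1 + s := by linarith [hs.1]
    have h2 : 0 < 1 - s := by linarith [hs.2]
    have ha : HasDerivAt (fun s:ℝ => 1+s) 1 s := by
      simpa using (hasDerivAt_id s).const_add 1
    have hb : HasDerivAt (fun s:ℝ => 1-s) (-1) s := by
      simpa using (hasDerivAt_id s).const_sub 1
    have hq : HasDerivAt (fun s : ℝ => (1+s)/(1-s)) (2/(1-s)^2) s := by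
      have := ha.div hb h2.ne'
      refine this.congr_deriv ?_
      ring
    have h3 : (1:ℝ) - s^2 ≠ 0 := by nlinarith [hs.1, hs.2]
    have hl : HasDerivAt (fun s : ℝ => Real.log ((1+s)/(1-s))) (2/(1-s^2)) s := by
      have heq : (2:ℝ)/(1-s)^2 / ((1+s)/(1-s)) = 2/(1-s^2) := by
        field_simp
        ring
      exact heq ▸ hq.log (by positivity)
    have hfinal : HasDerivAt (fun s : ℝ => θ/2 * Real.log ((1+s)/(1-s)) - θ₀ * s)
        (θ/(1-s^2) - θ₀) s := by
      have := (hl.const_mul (θ/2)).sub ((hasDerivAt_id s).const_mul θ₀)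
      refine this.congr_deriv ?_
      ring
    exact (funext hΨ' : Ψ' = _) ▸ hfinal
  have hcont : ContinuousOn Ψ' (Ioo (-1:ℝ) 1) :=
    fun s hs => (hderiv s hs).continuousAt.continuousWithinAt
  have hsub1 : Ioc (-1:ℝ) (-sstar) ⊆ Ioo (-1) 1 := fun x hx => ⟨hx.1, by linarith [hx.2]⟩
  have hsub2 : Ico sstar (1:ℝ) ⊆ Ioo (-1) 1 := fun x hx => ⟨by linarith [hx.1], hx.2⟩
  have hsub3 : Icc (-sstar) sstar ⊆ Ioo (-1:ℝ) 1 :=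
    fun x hx => ⟨by linarith [hx.1], by linarith [hx.2]⟩
  have hpos : ∀ x ∈ Ioo (-1:ℝ) 1, sstar^2 < x^2 → 0 < θ/(1-x^2) - θ₀ := by
    intro x hx h
    have h1 : 0 < 1 - x^2 := by nlinarith [hx.1, hx.2]
    rw [sub_pos, lt_div_iff₀ h1]
    nlinarith
  have hneg : ∀ x ∈ Ioo (-sstar) sstar, θ/(1-x^2) - θ₀ < 0 := by
    intro x hx
    have hx2 : x^2 < sstar^2 := sq_lt_sq' hx.1 hx.2
    have h1 : 0 < 1 - x^2 := by nlinarith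
    rw [sub_neg, div_lt_iff₀ h1]
    nlinarith
  have hmono1 : StrictMonoOn Ψ' (Ioc (-1:ℝ) (-sstar)) := by
    apply strictMonoOn_of_deriv_pos (convex_Ioc _ _) (hcont.mono hsub1)
    intro x hx
    rw [interior_Ioc] at hx
    have hx' : x ∈ Ioo (-1:ℝ) 1 := hsub1 ⟨hx.1, hx.2.le⟩
    rw [(hderiv x hx').deriv]
    exact hpos x hx' (by nlinarith [hx.2, hspos])
  have hmono2 : StrictMonoOn Ψ' (Ico sstar (1:ℝ)) := by
    apply strictMonoOn_of_deriv_pos (convex_Ico _ _) (hcont.mono hsub2)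
    intro x hx
    rw [interior_Ico] at hx
    have hx' : x ∈ Ioo (-1:ℝ) 1 := hsub2 ⟨hx.1.le, hx.2⟩
    rw [(hderiv x hx').deriv]
    exact hpos x hx' (by nlinarith [hx.1, hspos])
  have hanti : StrictAntiOn Ψ' (Icc (-sstar) sstar) := by
    apply strictAntiOn_of_deriv_neg (convex_Icc _ _) (hcont.mono hsub3)
    intro x hx
    rw [interior_Icc] at hx
    have hx' : x ∈ Ioo (-1:ℝ) 1 := hsub3 ⟨hx.1.le, hx.2.le⟩
    rw [(hderiv x hx').deriv]
    exact hneg x hx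
  have hΨ0 : Ψ' 0 = 0 := by
    rw [hΨ']; norm_num
  have hmem0 : (0:ℝ) ∈ Icc (-sstar) sstar := ⟨by linarith, hspos.le⟩
  have hmems : sstar ∈ Icc (-sstar) sstar := ⟨by linarith, le_refl _⟩
  have hmemns : -sstar ∈ Icc (-sstar) sstar := ⟨le_refl _, by linarith⟩
  have hfs_neg : Ψ' sstar < 0 := by
    have := hanti hmem0 hmems hspos
    rwa [hΨ0] at this
  have hfns_pos : 0 < Ψ' (-sstar) := by
    have := hodd sstar
    linarith
  have hss01 : sstar ∈ Ioo (0:ℝ) 1 := ⟨hspos, hslt1⟩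
  have hlb : ∀ x ∈ Ioo (0:ℝ) 1, Ψ' sstar ≤ Ψ' x := by
    intro x hx
    rcases le_or_gt x sstar with h | h
    · exact hanti.antitoneOn ⟨by linarith [hx.1], h⟩ hmems h
    · exact hmono2.monotoneOn ⟨le_refl _, hslt1⟩ ⟨h.le, hx.2⟩ h.le
  have hglb : IsGLB (Ψ' '' Ioo (0:ℝ) 1) (Ψ' sstar) := by
    apply IsLeast.isGLB
    refine ⟨⟨sstar, hss01, rfl⟩, ?_⟩
    rintro y ⟨x, hx, rfl⟩
    exact hlb x hx
  have hub : ∀ x ∈ Ioo (-1:ℝ) 0, Ψ' x ≤ Ψ' (-sstar) := by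
    intro x hx
    rcases le_or_gt x (-sstar) with h | h
    · exact hmono1.monotoneOn ⟨hx.1, h⟩ ⟨by linarith, le_refl _⟩ h
    · exact hanti.antitoneOn hmemns ⟨h.le, by linarith [hx.2]⟩ h.le
  have hlub : IsLUB (Ψ' '' Ioo (-1:ℝ) 0) (Ψ' (-sstar)) := by
    apply IsGreatest.isLUB
    refine ⟨⟨-sstar, ⟨by linarith, by linarith⟩, rfl⟩, ?_⟩
    rintro y ⟨x, hx, rfl⟩
    exact hub x hx
  have hforce : ∀ α, α ∈ Ioo (-1:ℝ) 0 ∧ Ψ' α = Ψ' sstar → α < -sstar := by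
    rintro α ⟨hα, hval⟩
    by_contra hcon
    push_neg at hcon
    have h0 : Ψ' 0 < Ψ' α := hanti ⟨hcon, by linarith [hα.2]⟩ hmem0 hα.2
    rw [hΨ0] at h0
    linarith [hval ▸ h0]
  have hforceβ : ∀ β, β ∈ Ioo (0:ℝ) 1 ∧ Ψ' β = Ψ' (-sstar) → sstar < β := by
    rintro β ⟨hβ, hv⟩
    have := hforce (-β) ⟨⟨by linarith [hβ.2], by linarith [hβ.1]⟩,
      by rw [hodd, hv, hodd, neg_neg]⟩
    linarith
  -- limit at -1 from the right
  have hlim : Tendsto Ψ' (𝓝[>] (-1:ℝ)) atBot := by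
    have h1 : Tendsto (fun s : ℝ => (1+s)/(1-s)) (𝓝[>] (-1:ℝ)) (𝓝[>] (0:ℝ)) := by
      rw [tendsto_nhdsWithin_iff]
      constructor
      · have : Tendsto (fun s : ℝ => (1+s)/(1-s)) (𝓝 (-1:ℝ)) (𝓝 ((1 + -1)/(1 - -1))) :=
          Filter.Tendsto.div ((continuous_const.add continuous_id).tendsto _)
            ((continuous_const.sub continuous_id).tendsto _) (by norm_num)
        simpa using this.mono_left nhdsWithin_le_nhds
      · filter_upwards [Ioo_mem_nhdsGT_of_mem
          (show (-1:ℝ) ∈ Ico (-1:ℝ) 0 by constructor <;> norm_num)] with s hs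
        have h1 : 0 < 1 + s := by linarith [hs.1]
        have h2 : 0 < 1 - s := by linarith [hs.2]
        exact div_pos h1 h2
    have h2 : Tendsto (fun s : ℝ => Real.log ((1+s)/(1-s))) (𝓝[>] (-1:ℝ)) atBot :=
      Real.tendsto_log_nhdsGT_zero.comp h1
    have h3 : Tendsto (fun s : ℝ => θ/2 * Real.log ((1+s)/(1-s))) (𝓝[>] (-1:ℝ)) atBot :=
      h2.const_mul_atBot (by positivity)
    have h5 : Tendsto (fun s : ℝ => θ/2 * Real.log ((1+s)/(1-s)) + θ₀) (𝓝[>] (-1:ℝ)) atBot :=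
      tendsto_atBot_add_const_right _ θ₀ h3
    apply tendsto_atBot_mono' _ _ h5
    filter_upwards [self_mem_nhdsWithin] with s hs
    have hs' : (-1:ℝ) < s := hs
    rw [hΨ']
    nlinarith [mul_nonneg hθ₀.le (by linarith : (0:ℝ) ≤ s+1)]
  -- existence of α₀
  obtain ⟨a, ha⟩ := ((hlim.eventually (eventually_lt_atBot (Ψ' sstar))).and
    (Ioo_mem_nhdsGT_of_mem (show (-1:ℝ) ∈ Ico (-1:ℝ) (-sstar) from
      ⟨le_refl _, by linarith⟩))).exists
  obtain ⟨hafs, ha1, ha2⟩ : Ψ' a < Ψ' sstar ∧ -1 < a ∧ a < -sstar := ⟨ha.1, ha.2.1, ha.2.2⟩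
  have hivt := intermediate_value_Icc (le_of_lt ha2)
    (hcont.mono (show Icc a (-sstar) ⊆ Ioo (-1:ℝ) 1 from
      fun x hx => ⟨by linarith [hx.1], by linarith [hx.2]⟩))
  obtain ⟨α₀, hα₀mem, hα₀⟩ := hivt ⟨hafs.le, by linarith⟩
  have hα₀Ioo : α₀ ∈ Ioo (-1:ℝ) 0 := ⟨by linarith [hα₀mem.1], by linarith [hα₀mem.2]⟩
  have hαexun : ∃! α, α ∈ Ioo (-1:ℝ) 0 ∧ Ψ' α = Ψ' sstar := by
    refine ⟨α₀, ⟨hα₀Ioo, hα₀⟩, ?_⟩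
    rintro β ⟨hβmem, hβval⟩
    have hβlt := hforce β ⟨hβmem, hβval⟩
    have hαlt := hforce α₀ ⟨hα₀Ioo, hα₀⟩
    exact hmono1.injOn ⟨hβmem.1, hβlt.le⟩ ⟨hα₀Ioo.1, hαlt.le⟩ (hβval.trans hα₀.symm)
  have hβexun : ∃! β, β ∈ Ioo (0:ℝ) 1 ∧ Ψ' β = Ψ' (-sstar) := by
    obtain ⟨α, ⟨hαmem, hαval⟩, hαuniq⟩ := hαexun
    refine ⟨-α, ⟨⟨by linarith [hαmem.2], by linarith [hαmem.1]⟩, ?_⟩, ?_⟩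
    · rw [hodd, hαval, hodd]
    · rintro β ⟨hβmem, hβval⟩
      have hβα : -β = α := hαuniq (-β) ⟨⟨by linarith [hβmem.2], by linarith [hβmem.1]⟩,
        by rw [hodd, hβval, hodd, neg_neg]⟩
      linarith [hβα]
  exact ⟨hss01, hmono1, hmono2, hanti, hfs_neg, hfns_pos, hglb, hlub, hαexun, hβexun,
    hforce, hforceβ⟩
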